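/- Any online algorithm that observes N distinct values in uniformly random order and must guarantee that the maximum value is among its selections with probability at least 1 − ε (with n > 1/ε) must make at least (1/2)·log₂(1/ε) − 1/2 selections in expectation. -/

import Mathlib

open Classical



lemma harmonic_ge (J : ℕ) (hJ : 1 ≤ J) :
    (1/2) * Real.logb 2 (J+1) + 1/2 ≤ ∑ m ∈ Finset.range J, (1:ℝ)/(m+1) := by
  induction J with
  | zero => omega
  | succ n ih =>
    rcases Nat.eq_or_lt_of_le hJ with h1 | h1
    · simp [← h1]
      rw [show ((1:ℝ) + 1 : ℝ) = 2 by norm_num, Real.logb_self_eq_one]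
      all_goals norm_num
    · have hn : 1 ≤ n := by omega
      have ihh := ih hn
      rw [Finset.sum_range_succ]
      have hpos : (0:ℝ) < (n:ℝ) + 1 := by positivity
      have key : (1/2) * Real.logb 2 ((n:ℝ)+1+1) - (1/2) * Real.logb 2 ((n:ℝ)+1) ≤ 1/((n:ℝ)+1) := by
        rw [← mul_sub, Real.logb, Real.logb, div_sub_div_same, ← Real.log_div (by positivity) (by positivity)]
        set x : ℝ := ((n:ℝ)+1+1)/((n:ℝ)+1) with hx
        have hx1 : (1:ℝ) ≤ x := by
          rw [hx, le_div_iff₀ hpos]; linarith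
        have hlognn : 0 ≤ Real.log x := Real.log_nonneg hx1
        have hlog : Real.log x ≤ 1/((n:ℝ)+1) := by
          have := Real.log_le_sub_one_of_pos (show (0:ℝ) < x by positivity)
          have : Real.log x ≤ x - 1 := this
          have hxe : x - 1 = 1/((n:ℝ)+1) := by rw [hx]; field_simp; ring
          linarith
        have h3 : (1:ℝ)/2 ≤ Real.log 2 := by
          have := Real.log_two_gt_d9; linarith
        have h4 : Real.log x / Real.log 2 ≤ Real.log x / (1/2) :=
          div_le_div_of_nonneg_left hlognn (by norm_num) h3
        have : Real.log x / (1/2) = 2 * Real.log x := by ring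
        nlinarith
      push_cast
      push_cast at ihh
      linarith


lemma first_count {N : ℕ} (S : Finset (Fin N)) (x : Fin N) (hx : x ∈ S) :
    (Finset.univ.filter (fun σ : Equiv.Perm (Fin N) => ∀ y ∈ S, σ⁻¹ x ≤ σ⁻¹ y)).card * S.card
      = (Finset.univ : Finset (Equiv.Perm (Fin N))).card := by
  classical
  set P : Fin N → Equiv.Perm (Fin N) → Prop := fun z σ => ∀ y ∈ S, σ⁻¹ z ≤ σ⁻¹ y with hP
  -- all fibers have the same cardinality
  have hfib : ∀ z ∈ S, (Finset.univ.filter (P z)).card = (Finset.univ.filter (P x)).card := by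
    intro z hz
    apply Finset.card_nbij' (i := fun σ => (Equiv.swap x z) * σ) (j := fun σ => (Equiv.swap x z) * σ)
    · intro σ hσ
      simp only [Finset.mem_coe, Finset.mem_filter, Finset.mem_univ, true_and, hP] at hσ ⊢
      intro y hy
      have h1 : ((Equiv.swap x z) * σ)⁻¹ = σ⁻¹ * (Equiv.swap x z) := by
        rw [mul_inv_rev, Equiv.swap_inv]
      rw [h1]
      simp only [Equiv.Perm.mul_apply]
      have hyS : Equiv.swap x z y ∈ S := by
        rcases eq_or_ne y x with rfl | hxy
        · rwa [Equiv.swap_apply_left]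
        rcases eq_or_ne y z with rfl | hzy
        · rwa [Equiv.swap_apply_right]
        · rwa [Equiv.swap_apply_of_ne_of_ne hxy hzy]
      have := hσ _ hyS
      simpa only [Equiv.swap_apply_left] using this
    · intro σ hσ
      simp only [Finset.mem_coe, Finset.mem_filter, Finset.mem_univ, true_and, hP] at hσ ⊢
      intro y hy
      have h1 : ((Equiv.swap x z) * σ)⁻¹ = σ⁻¹ * (Equiv.swap x z) := by
        rw [mul_inv_rev, Equiv.swap_inv]
      rw [h1]
      simp only [Equiv.Perm.mul_apply]
      have hyS : Equiv.swap x z y ∈ S := by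
        rcases eq_or_ne y x with rfl | hxy
        · rwa [Equiv.swap_apply_left]
        rcases eq_or_ne y z with rfl | hzy
        · rwa [Equiv.swap_apply_right]
        · rwa [Equiv.swap_apply_of_ne_of_ne hxy hzy]
      have := hσ _ hyS
      simpa only [Equiv.swap_apply_right] using this
    · intro σ _; show Equiv.swap x z * (Equiv.swap x z * σ) = σ; rw [← mul_assoc, Equiv.swap_mul_self, one_mul]
    · intro σ _; show Equiv.swap x z * (Equiv.swap x z * σ) = σ; rw [← mul_assoc, Equiv.swap_mul_self, one_mul]
  -- the fibers partition univ
  have hunion : S.biUnion (fun z => Finset.univ.filter (P z)) = Finset.univ := by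
    apply Finset.eq_univ_of_forall
    intro σ
    rw [Finset.mem_biUnion]
    have hne : (S.image (fun y => σ⁻¹ y)).Nonempty := ⟨σ⁻¹ x, Finset.mem_image_of_mem _ hx⟩
    obtain ⟨y₀, hy₀S, hy₀⟩ := Finset.mem_image.mp (Finset.min'_mem _ hne)
    refine ⟨y₀, hy₀S, ?_⟩
    simp only [Finset.mem_filter, Finset.mem_univ, true_and, hP]
    intro y hy
    rw [hy₀]
    exact Finset.min'_le _ _ (Finset.mem_image_of_mem _ hy)
  have hdisj : ∀ z₁ ∈ S, ∀ z₂ ∈ S, z₁ ≠ z₂ →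
      Disjoint (Finset.univ.filter (P z₁)) (Finset.univ.filter (P z₂)) := by
    intro z₁ h₁ z₂ h₂ hne
    rw [Finset.disjoint_left]
    intro σ hσ1 hσ2
    simp only [Finset.mem_filter, Finset.mem_univ, true_and, hP] at hσ1 hσ2
    exact hne (σ⁻¹.injective (le_antisymm (hσ1 _ h₂) (hσ2 _ h₁)))
  calc (Finset.univ.filter (P x)).card * S.card
      = ∑ z ∈ S, (Finset.univ.filter (P z)).card := by
        rw [Finset.sum_congr rfl hfib, Finset.sum_const, smul_eq_mul, mul_comm]
    _ = (S.biUnion (fun z => Finset.univ.filter (P z))).card := (Finset.card_biUnion hdisj).symm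
    _ = _ := by rw [hunion]


-- value function for input j : commons 0..N-j-1 keep value, specials get N+1..N+j
def avn (N j i : ℕ) : ℕ := if i < N - j then i else N + (i - (N - j)) + 1

-- relabeling of items from input J to input j
def pfn (N J j i : ℕ) : ℕ :=
  if i < N - J then i else if i < N - j then i + j else i - (J - j)

lemma avn_inj {N j : ℕ} {i i' : ℕ} (hi : i < N) (hi' : i' < N)
    (h : avn N j i = avn N j i') : i = i' := by
  unfold avn at h; split_ifs at h <;> omega

lemma avn_max {N j : ℕ} (hj : 1 ≤ j) (hjN : j ≤ N) {i : ℕ} (hi : i < N) :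
    avn N j i ≤ avn N j (N - 1) := by
  unfold avn; split_ifs <;> omega

lemma avn_max_val {N j : ℕ} (hj : 1 ≤ j) (hjN : j ≤ N) : avn N j (N - 1) = N + j := by
  unfold avn; split_ifs <;> omega

lemma pfn_lt {N J j i : ℕ} (hj : 1 ≤ j) (hjJ : j ≤ J) (hJN : J ≤ N) (hi : i < N) :
    pfn N J j i < N := by
  unfold pfn; split_ifs <;> omega

lemma pfn_inj {N J j : ℕ} (hj : 1 ≤ j) (hjJ : j ≤ J) (hJN : J ≤ N) {i i' : ℕ}
    (hi : i < N) (hi' : i' < N) (h : pfn N J j i = pfn N J j i') : i = i' := by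
  unfold pfn at h; split_ifs at h <;> omega

lemma pfn_key {N J j i : ℕ} (hj : 1 ≤ j) (hjJ : j ≤ J) (hJN : J ≤ N) (hi : i < N)
    (h : i < N - J ∨ N - j ≤ i) : avn N J (pfn N J j i) = avn N j i := by
  unfold avn pfn; split_ifs <;> omega

lemma pfn_max {N J j : ℕ} (hj : 1 ≤ j) (hjJ : j ≤ J) (hJN : J < N) :
    pfn N J j (N - 1) = N - J + j - 1 := by
  unfold pfn; split_ifs <;> omega

/-- Any (deterministic) online algorithm — modeled as a decision rule `D` that, for the
item arriving at each position, sees only the values arrived so far — which guarantees,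
for every input of `N` distinct values, to select the maximum with probability at least
`1 - ε` over the uniformly random arrival order (with `N > 1/ε`), must on some input make
at least `(1/2)·log₂(1/ε) - 1/2` selections in expectation. -/
theorem stmt10 (N : ℕ) (hN : 0 < N) (ε : ℝ) (hε0 : 0 < ε) (hε1 : ε < 1)
    (hNε : 1 / ε < (N : ℝ))
    (D : (t : Fin N) → (Fin ((t : ℕ) + 1) → ℝ) → Bool)
    -- `selected a σ t`: on input values `a` arriving in order `σ`, the algorithm selects
    -- the item arriving at position `t`, based only on the values seen so far.
    (selected : (Fin N → ℝ) → Equiv.Perm (Fin N) → Fin N → Prop)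
    (hselected : ∀ a σ t, selected a σ t ↔
      D t (fun s : Fin ((t : ℕ) + 1) => a (σ (Fin.castLE t.isLt s))) = true)
    -- guarantee: for every input of distinct values, the maximum is selected with
    -- probability at least 1 - ε over the uniformly random arrival order
    (hguarantee : ∀ a : Fin N → ℝ, Function.Injective a →
      (1 - ε) * ((Finset.univ : Finset (Equiv.Perm (Fin N))).card : ℝ) ≤
        (((Finset.univ : Finset (Equiv.Perm (Fin N))).filter
          (fun σ => ∃ t : Fin N, (∀ s : Fin N, a (σ s) ≤ a (σ t)) ∧ selected a σ t)).card : ℝ)) :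
    -- conclusion: on some input, the expected number of selections is at least
    -- (1/2) log₂(1/ε) - 1/2
    ∃ a : Fin N → ℝ, Function.Injective a ∧
      ((1 / 2) * Real.logb 2 (1 / ε) - 1 / 2) *
          ((Finset.univ : Finset (Equiv.Perm (Fin N))).card : ℝ) ≤
        ∑ σ : Equiv.Perm (Fin N),
          ((Finset.univ.filter (fun t : Fin N => selected a σ t)).card : ℝ) := by
  classical
  set C : ℝ := ((Finset.univ : Finset (Equiv.Perm (Fin N))).card : ℝ) with hC
  have hC0 : (0:ℝ) ≤ C := by positivity
  set J : ℕ := Nat.floor (1/ε) with hJdef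
  have hJ1 : 1 ≤ J := by
    apply Nat.le_floor
    rw [Nat.cast_one, le_div_iff₀ hε0]
    linarith
  have hJle : (J:ℝ) ≤ 1/ε := Nat.floor_le (by positivity)
  have hJN : J < N := by
    have : (J:ℝ) < (N:ℝ) := lt_of_le_of_lt hJle hNε
    exact_mod_cast this
  have hεJ : ε * (J:ℝ) ≤ 1 := by
    have h := mul_le_mul_of_nonneg_left hJle hε0.le
    have h2 : ε * (1/ε) = 1 := by field_simp
    linarith
  have hεJ1 : 1/ε < (J:ℝ) + 1 := by
    have := Nat.lt_floor_add_one (1/ε)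
    push_cast at this
    linarith
  -- the family of inputs
  set A : ℕ → Fin N → ℝ := fun j i => ((avn N j (i:ℕ) : ℕ) : ℝ) with hA
  have hAinj : ∀ j, Function.Injective (A j) := by
    intro j i i' h
    rw [hA] at h
    exact Fin.ext (avn_inj i.isLt i'.isLt (Nat.cast_inj.mp h))
  have hmxlt : N - 1 < N := by omega
  set mx : Fin N := ⟨N-1, hmxlt⟩ with hmx
  have hAmax : ∀ j, 1 ≤ j → j ≤ N → ∀ i : Fin N, A j i ≤ A j mx := by
    intro j h1 h2 i
    show ((avn N j ((i : Fin N):ℕ) : ℕ):ℝ) ≤ ((avn N j ((mx : Fin N):ℕ) : ℕ):ℝ)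
    exact_mod_cast avn_max h1 h2 i.isLt
  refine ⟨A J, hAinj J, ?_⟩
  -- target positions
  have htg : ∀ k, k < J → N - J + k < N := by omega
  set tg : ℕ → Fin N := fun k => if h : N - J + k < N then ⟨N - J + k, h⟩ else mx with htgdef
  have htgval : ∀ k, k < J → ((tg k : Fin N) : ℕ) = N - J + k := by
    intro k hk
    rw [htgdef]
    simp only [dif_pos (htg k hk)]
  set Bs : ℕ → Finset (Equiv.Perm (Fin N)) :=
    fun k => Finset.univ.filter (fun σ' => selected (A J) σ' (σ'⁻¹ (tg k))) with hBs
  -- main per-scale bound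
  have main : ∀ k ∈ Finset.range J,
      (1 - ε) * C + C / ((J - k : ℕ):ℝ) - C ≤ ((Bs k).card : ℝ) := by
    intro k hk
    rw [Finset.mem_range] at hk
    set j : ℕ := k + 1 with hj
    have hj1 : 1 ≤ j := by omega
    have hjJ : j ≤ J := by omega
    have hJN' : J ≤ N := by omega
    -- the "dangerous" items together with the max item
    set S : Finset (Fin N) :=
      insert mx (Finset.univ.filter (fun i : Fin N => N - J ≤ (i:ℕ) ∧ (i:ℕ) < N - j)) with hS
    have hmxS : mx ∈ S := Finset.mem_insert_self _ _
    have hScard : S.card = J - k := by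
      rw [hS, Finset.card_insert_of_notMem (by
        simp only [Finset.mem_filter, Finset.mem_univ, true_and, hmx]
        omega)]
      have : (Finset.univ.filter (fun i : Fin N => N - J ≤ (i:ℕ) ∧ (i:ℕ) < N - j)).card
          = (Finset.Ico (N - J) (N - j)).card := by
        apply Finset.card_nbij (i := fun a : Fin N => (a:ℕ))
        · intro a ha
          simp only [Finset.mem_coe, Finset.mem_filter, Finset.mem_univ, true_and] at ha
          simp only [Finset.mem_coe, Finset.mem_Ico]
          omega
        · intro a ha b hb h
          exact Fin.ext h
        · intro m hm
          simp only [Finset.coe_filter, Finset.mem_univ, true_and, Set.mem_image,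
            Finset.mem_coe, Finset.mem_Ico] at *
          exact ⟨⟨m, by omega⟩, by simpa using hm, rfl⟩
      rw [this, Nat.card_Ico]
      omega
    -- clean permutations: the max arrives before all dangerous items
    set Clean : Finset (Equiv.Perm (Fin N)) :=
      Finset.univ.filter (fun σ => ∀ y ∈ S, σ⁻¹ mx ≤ σ⁻¹ y) with hClean
    have hCleancard : (Clean.card : ℝ) * ((J - k : ℕ):ℝ) = C := by
      have h := first_count S mx hmxS
      rw [hScard] at h
      rw [hClean, hC]
      exact_mod_cast h
    -- permutations selecting the max of A j at its arrival
    set Sel : Finset (Equiv.Perm (Fin N)) :=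
      Finset.univ.filter (fun σ => selected (A j) σ (σ⁻¹ mx)) with hSel
    have hSelcard : (1 - ε) * C ≤ (Sel.card : ℝ) := by
      refine le_trans (hguarantee (A j) (hAinj j)) ?_
      apply Nat.cast_le.mpr
      apply Finset.card_le_card
      intro σ hσ
      simp only [Finset.mem_filter, Finset.mem_univ, true_and] at hσ
      rw [hSel]
      simp only [Finset.mem_filter, Finset.mem_univ, true_and]
      obtain ⟨t, hmaxt, hsel⟩ := hσ
      have h1 : A j (σ t) = A j mx := by
        refine le_antisymm (hAmax j hj1 (by omega) _) ?_
        have := hmaxt (σ⁻¹ mx)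
        simpa using this
      have h2 : σ t = mx := hAinj j h1
      have h3 : t = σ⁻¹ mx := by rw [← h2]; simp
      rwa [← h3]
    set Good : Finset (Equiv.Perm (Fin N)) := Sel ∩ Clean with hGood
    have hGoodcard : (1 - ε) * C + C / ((J - k : ℕ):ℝ) - C ≤ (Good.card : ℝ) := by
      have h1 := Finset.card_inter_add_card_union Sel Clean
      have h2 : (Sel ∪ Clean).card ≤ (Finset.univ : Finset (Equiv.Perm (Fin N))).card :=
        Finset.card_le_card (Finset.subset_univ _)
      have h3 : ((Sel ∩ Clean).card : ℝ) + ((Sel ∪ Clean).card : ℝ) = (Sel.card : ℝ) + (Clean.card : ℝ) := by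
        exact_mod_cast congrArg (Nat.cast : ℕ → ℝ) h1
      have h4 : ((Sel ∪ Clean).card : ℝ) ≤ C := by rw [hC]; exact_mod_cast h2
      have h5 : (0:ℝ) < ((J - k : ℕ):ℝ) := by
        have : 0 < J - k := by omega
        exact_mod_cast this
      have h6 : (Clean.card : ℝ) = C / ((J - k : ℕ):ℝ) := by
        field_simp
        linarith [hCleancard]
      rw [hGood]
      linarith
    -- relabeling permutation
    have hpflt : ∀ i : Fin N, pfn N J j (i:ℕ) < N := fun i => pfn_lt hj1 hjJ hJN' i.isLt
    set pF : Fin N → Fin N := fun i => ⟨pfn N J j (i:ℕ), hpflt i⟩ with hpF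
    have hpFinj : Function.Injective pF := by
      intro i i' h
      exact Fin.ext (pfn_inj hj1 hjJ hJN' i.isLt i'.isLt (congrArg Fin.val h))
    set π : Equiv.Perm (Fin N) := Equiv.ofBijective pF (Finite.injective_iff_bijective.mp hpFinj)
      with hπ
    have hπapp : ∀ i : Fin N, π i = pF i := fun i => rfl
    have hπmx : π mx = tg k := by
      apply Fin.ext
      rw [hπapp, htgval k hk, hpF]
      simp only [hmx]
      rw [pfn_max hj1 hjJ hJN]
      omega
    -- transfer to input A J
    have htrans : Good.card ≤ (Bs k).card := by
      apply Finset.card_le_card_of_injOn (fun σ => π * σ)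
      · intro σ hσ
        rw [hGood, Finset.mem_coe, Finset.mem_inter, hSel, hClean] at hσ
        obtain ⟨hσsel, hσcl⟩ := hσ
        simp only [Finset.mem_filter, Finset.mem_univ, true_and] at hσsel hσcl
        rw [hBs]
        simp only [Finset.mem_coe, Finset.mem_filter, Finset.mem_univ, true_and]
        have h1 : (π * σ)⁻¹ (tg k) = σ⁻¹ mx := by
          rw [← hπmx, mul_inv_rev]
          simp
        rw [h1]
        rw [hselected] at hσsel ⊢
        have h2 : (fun s : Fin (((σ⁻¹ mx : Fin N) : ℕ) + 1) =>
              A J ((π * σ) (Fin.castLE (σ⁻¹ mx).isLt s)))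
            = (fun s : Fin (((σ⁻¹ mx : Fin N) : ℕ) + 1) =>
              A j (σ (Fin.castLE (σ⁻¹ mx).isLt s))) := by
          funext s
          simp only [Equiv.Perm.mul_apply]
          set y : Fin N := σ (Fin.castLE (σ⁻¹ mx).isLt s) with hy
          have hyval : A J (π y) = ((avn N J (pfn N J j (y:ℕ)) : ℕ) : ℝ) := by
            rw [hA, hπapp, hpF]
          rw [hyval, hA]
          apply Nat.cast_inj.mpr
          apply pfn_key hj1 hjJ hJN' y.isLt
          by_contra hcond
          push_neg at hcond
          have hyS : y ∈ S := by
            rw [hS]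
            apply Finset.mem_insert_of_mem
            simp only [Finset.mem_filter, Finset.mem_univ, true_and]
            omega
          have hle1 : σ⁻¹ mx ≤ σ⁻¹ y := hσcl y hyS
          have hyinv : σ⁻¹ y = Fin.castLE (σ⁻¹ mx).isLt s := by rw [hy]; simp
          have hle2 : (σ⁻¹ y : ℕ) ≤ ((σ⁻¹ mx : Fin N) : ℕ) := by
            rw [hyinv]
            simpa using Nat.lt_succ_iff.mp s.isLt
          have heq : σ⁻¹ y = σ⁻¹ mx := by
            apply Fin.ext
            exact le_antisymm hle2 hle1
          have : y = mx := σ⁻¹.injective heq ▸ rfl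
          rw [hmx] at this
          have : (y:ℕ) = N - 1 := congrArg Fin.val this
          omega
        rw [h2]
        exact hσsel
      · intro σ _ σ' _ h
        exact mul_left_cancel h
    have : (Good.card : ℝ) ≤ ((Bs k).card : ℝ) := Nat.cast_le.mpr htrans
    linarith
  -- counting selections on input A J
  have hsum : ∑ k ∈ Finset.range J, (Bs k).card ≤
      ∑ σ : Equiv.Perm (Fin N), (Finset.univ.filter (fun t : Fin N => selected (A J) σ t)).card := by
    have h1 : ∀ k, (Bs k).card
        = ∑ σ : Equiv.Perm (Fin N), if selected (A J) σ (σ⁻¹ (tg k)) then 1 else 0 := by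
      intro k
      rw [hBs]
      exact Finset.card_filter _ _
    calc ∑ k ∈ Finset.range J, (Bs k).card
        = ∑ k ∈ Finset.range J, ∑ σ : Equiv.Perm (Fin N),
            if selected (A J) σ (σ⁻¹ (tg k)) then 1 else 0 := Finset.sum_congr rfl (fun k _ => h1 k)
      _ = ∑ σ : Equiv.Perm (Fin N), ∑ k ∈ Finset.range J,
            if selected (A J) σ (σ⁻¹ (tg k)) then 1 else 0 := Finset.sum_comm
      _ ≤ _ := by
          apply Finset.sum_le_sum
          intro σ _
          rw [← Finset.card_filter]
          apply Finset.card_le_card_of_injOn (fun k => σ⁻¹ (tg k))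
          · intro k hkk
            simp only [Finset.mem_coe, Finset.mem_filter, Finset.mem_range] at hkk
            simp only [Finset.mem_coe, Finset.mem_filter, Finset.mem_univ, true_and]
            exact hkk.2
          · intro k hkk k' hkk' h
            simp only [Finset.coe_filter, Finset.mem_range, Set.mem_setOf_eq] at hkk hkk'
            have h2 : tg k = tg k' := σ⁻¹.injective h
            have h3 : ((tg k : Fin N) : ℕ) = ((tg k' : Fin N) : ℕ) := congrArg Fin.val h2
            rw [htgval k hkk.1, htgval k' hkk'.1] at h3
            omega
  -- harmonic sum identity
  have hrefl : ∑ k ∈ Finset.range J, (1:ℝ)/((J - k : ℕ):ℝ) = ∑ m ∈ Finset.range J, (1:ℝ)/((m:ℝ)+1) := by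
    rw [← Finset.sum_range_reflect (fun m => (1:ℝ)/((m:ℝ)+1)) J]
    apply Finset.sum_congr rfl
    intro k hkk
    rw [Finset.mem_range] at hkk
    have h1 : (J - k : ℕ) = (J - 1 - k) + 1 := by omega
    rw [h1]
    push_cast
    ring
  -- final arithmetic
  have hhar := harmonic_ge J hJ1
  have hlogb : Real.logb 2 (1/ε) ≤ Real.logb 2 ((J:ℝ)+1) :=
    Real.logb_le_logb_of_le (by norm_num) (by positivity) (le_of_lt hεJ1)
  have hfinal : ((1 / 2) * Real.logb 2 (1 / ε) - 1 / 2) * C ≤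
      ∑ k ∈ Finset.range J, ((1 - ε) * C + C / ((J - k : ℕ):ℝ) - C) := by
    have hsum2 : ∑ k ∈ Finset.range J, ((1 - ε) * C + C / ((J - k : ℕ):ℝ) - C)
        = C * (∑ k ∈ Finset.range J, (1:ℝ)/((J - k : ℕ):ℝ)) - ε * (J:ℝ) * C := by
      have he : ∀ k ∈ Finset.range J, (1 - ε) * C + C / ((J - k : ℕ):ℝ) - C
          = C * ((1:ℝ)/((J - k : ℕ):ℝ)) + (-(ε * C)) := by
        intro k _; ring
      rw [Finset.sum_congr rfl he, Finset.sum_add_distrib, Finset.sum_const, ← Finset.mul_sum]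
      simp only [Finset.card_range, nsmul_eq_mul]
      ring
    rw [hsum2, hrefl]
    have hH : (1/2) * Real.logb 2 (1/ε) + 1/2 ≤ ∑ m ∈ Finset.range J, (1:ℝ)/((m:ℝ)+1) := by
      calc (1/2) * Real.logb 2 (1/ε) + 1/2 ≤ (1/2) * Real.logb 2 ((J:ℝ)+1) + 1/2 := by linarith
        _ ≤ _ := by
            have := harmonic_ge J hJ1
            push_cast at this ⊢
            linarith
    set H : ℝ := ∑ m ∈ Finset.range J, (1:ℝ)/((m:ℝ)+1) with hH2
    have : (1/2) * Real.logb 2 (1/ε) - 1/2 ≤ H - ε * (J:ℝ) := by linarith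
    calc ((1 / 2) * Real.logb 2 (1 / ε) - 1 / 2) * C ≤ (H - ε * (J:ℝ)) * C :=
          mul_le_mul_of_nonneg_right this hC0
      _ = C * H - ε * (J:ℝ) * C := by ring
  calc ((1 / 2) * Real.logb 2 (1 / ε) - 1 / 2) * C
      ≤ ∑ k ∈ Finset.range J, ((1 - ε) * C + C / ((J - k : ℕ):ℝ) - C) := hfinal
    _ ≤ ∑ k ∈ Finset.range J, ((Bs k).card : ℝ) := Finset.sum_le_sum main
    _ ≤ _ := by
        have := hsum
        calc (∑ k ∈ Finset.range J, ((Bs k).card : ℝ))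
            = ((∑ k ∈ Finset.range J, (Bs k).card : ℕ) : ℝ) := by push_cast; ring
          _ ≤ _ := by
              push_cast
              exact_mod_cast Nat.cast_le.mpr hsum
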